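/- arXiv:1003.4421 — 6 statements merged into one kernel-verified Lean document; each statement's English description precedes it below -/
import Mathlib

section
/- Let q be an odd prime power and T a generator of the character group of F_q^*. Then for every integer k, G_{-k} · G_{-(q-1)/2 - k} = G_{-2k} · T^k(4) · G_{(q-1)/2}, where G_m denotes the Gauss sum of T^m. -/
open Finset

/-- The canonical additive character `θ(α) = e^{2πi·tr(α)/p}` of `F = F_q`, `q = p^e`. -/
noncomputable def theta (p : ℕ) (F : Type) [Field F] [Fintype F] [Algebra (ZMod p) F]
    (α : F) : ℂ :=
  Complex.exp (2 * Real.pi * Complex.I * ((Algebra.trace (ZMod p) F α).val : ℂ) / p)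

/-- The Gauss sum `G_m = ∑_{x ∈ F_q} T^m(x) θ(x)` (recall `T^m (0) = 0` for `T^m` nontrivial,
and characters are extended by `χ(0) = 0`). -/
noncomputable def gaussT (p : ℕ) (F : Type) [Field F] [Fintype F] [Algebra (ZMod p) F]
    (T : MulChar F ℂ) (m : ℤ) : ℂ :=
  ∑ x : F, (T ^ m) x * theta p F x

/-- The normalized Jacobi sum `binom(A,B) = (B(-1)/q) · J(A, B̄)`. -/
noncomputable def binomC (F : Type) [Field F] [Fintype F] (A B : MulChar F ℂ) : ℂ :=
  B (-1) / (Fintype.card F : ℂ) * jacobiSum A B⁻¹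

/-- Greene's Gaussian hypergeometric series `₂F₁(A,B;C|x)_q`, the sum over all
multiplicative characters `χ = T^m` of `F_q^*`, written via a generator `T` of the
character group. -/
noncomputable def hypF21 (F : Type) [Field F] [Fintype F] (T : MulChar F ℂ)
    (A B C : MulChar F ℂ) (x : F) : ℂ :=
  (Fintype.card F : ℂ) / ((Fintype.card F : ℂ) - 1) *
    ∑ m ∈ Finset.range (Fintype.card F - 1),
      binomC F (A * T ^ m) (T ^ m) * binomC F (B * T ^ m) (C * T ^ m) * (T ^ m) x

variable {F : Type} [Field F] [Fintype F]

noncomputable def quadC (F : Type) [Field F] [Fintype F] [DecidableEq F] : MulChar F ℂ :=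
  (quadraticChar F).ringHomComp (Int.castRingHom ℂ)

lemma sum_sq_eq [DecidableEq F] (hc : ringChar F ≠ 2) (f : F → ℂ) :
    ∑ t : F, f (t ^ 2) = ∑ u : F, ((quadC F u) + 1) * f u := by
  have key : ∀ u : F, ((quadC F u) + 1) = ((univ.filter (fun t : F => t ^ 2 = u)).card : ℂ) := by
    intro u
    have h := quadraticChar_card_sqrts hc u
    have : ({x : F | x ^ 2 = u}.toFinset) = univ.filter (fun t : F => t ^ 2 = u) := by
      ext x; simp
    rw [this] at h
    have := congrArg (fun n : ℤ => (n : ℂ)) h.symm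
    simpa [quadC, MulChar.ringHomComp] using this
  rw [← Finset.sum_fiberwise (univ : Finset F) (fun t : F => t ^ 2) (fun t => f (t ^ 2))]
  refine Finset.sum_congr rfl fun u _ => ?_
  rw [key u]
  rw [Finset.sum_congr rfl (fun t ht => by rw [(Finset.mem_filter.mp ht).2])]
  rw [Finset.sum_const, nsmul_eq_mul]

lemma jac_key [DecidableEq F] (hc : ringChar F ≠ 2) {χ : MulChar F ℂ} (hχ : χ ≠ 1) :
    jacobiSum χ χ = χ 4⁻¹ * jacobiSum χ (quadC F) := by
  have h2 : (2 : F) ≠ 0 := Ring.two_ne_zero hc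
  have h2i : (2 : F)⁻¹ ≠ 0 := inv_ne_zero h2
  -- reindex x = (1+t)/2
  have e : F ≃ F := (Equiv.addLeft (1 : F)).trans (Equiv.mulLeft₀ (2 : F)⁻¹ h2i)
  have step1 : jacobiSum χ χ = χ 4⁻¹ * ∑ t : F, χ (1 - t ^ 2) := by
    rw [jacobiSum, ← Equiv.sum_comp ((Equiv.addLeft (1 : F)).trans (Equiv.mulLeft₀ (2 : F)⁻¹ h2i))
      (fun x => χ x * χ (1 - x)), Finset.mul_sum]
    refine Finset.sum_congr rfl fun t _ => ?_
    simp only [Equiv.trans_apply, Equiv.coe_addLeft, Equiv.mulLeft₀_apply]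
    rw [← map_mul, ← map_mul]
    congr 1
    have h4 : (4 : F) = 2 * 2 := by norm_num
    have h4' : (4 : F) ≠ 0 := by rw [h4]; exact mul_ne_zero h2 h2
    field_simp
    ring
  rw [step1]
  congr 1
  rw [sum_sq_eq hc (fun u => χ (1 - u))]
  have : ∀ u : F, ((quadC F u) + 1) * χ (1 - u) = quadC F u * χ (1 - u) + χ (1 - u) := by
    intro u; ring
  rw [Finset.sum_congr rfl fun u _ => this u, Finset.sum_add_distrib]
  have hz : ∑ u : F, χ (1 - u) = 0 := by
    have := Equiv.sum_comp (Equiv.subLeft (1 : F)) (fun v => χ v)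
    simp only [Equiv.subLeft_apply] at this
    rw [this]
    exact MulChar.sum_eq_zero_of_ne_one hχ
  rw [hz, add_zero, jacobiSum_comm, jacobiSum]

lemma quadC_ne_one [DecidableEq F] (hc : ringChar F ≠ 2) : quadC F ≠ 1 := by
  obtain ⟨a, ha⟩ := quadraticChar_exists_neg_one hc
  have ha0 : a ≠ 0 := by
    intro h; rw [h, quadraticChar_zero] at ha; norm_num at ha
  intro h
  have := congrArg (fun χ : MulChar F ℂ => χ a) h
  simp only [quadC, MulChar.ringHomComp_apply, ha, MulChar.one_apply (Ne.isUnit ha0)] at this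
  norm_num at this

lemma quadC_sq [DecidableEq F] : quadC F ^ 2 = 1 := by
  have h := (quadraticChar_isQuadratic F).sq_eq_one
  have := congrArg (fun χ : MulChar F ℤ => χ.ringHomComp (Int.castRingHom ℂ)) h
  simpa [MulChar.ringHomComp_pow, MulChar.ringHomComp_one, quadC, pow_two,
    MulChar.ringHomComp_mul] using this

lemma hd_product [DecidableEq F] (hc : ringChar F ≠ 2) (hc0 : ringChar F ≠ 0)
    (ψ : AddChar F ℂ) (χ : MulChar F ℂ)
    (hsq : ∀ ξ : MulChar F ℂ, ξ ^ 2 = 1 → ξ = 1 ∨ ξ = quadC F) :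
    gaussSum χ ψ * gaussSum (χ * quadC F) ψ =
      gaussSum (χ ^ 2) ψ * χ 4⁻¹ * gaussSum (quadC F) ψ := by
  have h2 : (2 : F) ≠ 0 := Ring.two_ne_zero hc
  have h4 : (4 : F) ≠ 0 := by
    have : (4 : F) = 2 * 2 := by norm_num
    rw [this]; exact mul_ne_zero h2 h2
  have hφ := quadC_ne_one hc
  have hφ2 : quadC F ^ 2 = 1 := quadC_sq
  by_cases hχ2 : χ ^ 2 = 1
  · rcases hsq χ hχ2 with h1 | h1
    · subst h1
      rw [MulChar.one_apply (Ne.isUnit (inv_ne_zero h4))]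
      rw [one_mul, one_pow]
      ring
    · subst h1
      have hinv : (quadC F) 4⁻¹ = 1 := by
        have h2i : (2 : F)⁻¹ ≠ 0 := inv_ne_zero h2
        have h4i : (4 : F)⁻¹ = ((2 : F)⁻¹) ^ 2 := by
          rw [show (4 : F) = 2 ^ 2 by norm_num]; rw [inv_pow]
        simp only [quadC, MulChar.ringHomComp_apply, h4i, quadraticChar_sq_one' h2i]
        norm_num
      rw [hinv, show quadC F * quadC F = quadC F ^ 2 from (pow_two _).symm]
      ring
  · have hχ1 : χ ≠ 1 := by rintro rfl; simp at hχ2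
    have hχφ : χ * quadC F ≠ 1 := by
      intro h
      have : χ = (quadC F)⁻¹ := eq_inv_of_mul_eq_one_left h
      rw [this, inv_pow, hφ2, inv_one] at hχ2
      exact hχ2 rfl
    have h1 := jacobiSum_mul_nontrivial (by rwa [← pow_two]) ψ (χ := χ) (φ := χ)
    have h2' := jacobiSum_mul_nontrivial hχφ ψ (χ := χ) (φ := quadC F)
    have hj := jac_key hc hχ1
    have hJne : jacobiSum χ (quadC F) ≠ 0 := by
      have hcc : ringChar ℂ ≠ ringChar F := by
        rw [ringChar.eq_zero]; exact fun h => hc0 h.symm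
      have := jacobiSum_mul_jacobiSum_inv hcc hχ1 hφ hχφ
      intro h0
      rw [h0, zero_mul] at this
      exact_mod_cast (Fintype.card_ne_zero (α := F)) (by exact_mod_cast this.symm)
    apply mul_right_cancel₀ hJne
    rw [pow_two] at *
    linear_combination gaussSum χ ψ * h2' - gaussSum (quadC F) ψ * h1 +
      gaussSum (χ * χ) ψ * gaussSum (quadC F) ψ * hj

lemma orderT [DecidableEq F] (T : MulChar F ℂ) (hT : ∀ χ : MulChar F ℂ, ∃ n : ℕ, χ = T ^ n) :
    orderOf T = Fintype.card F - 1 := by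
  haveI : NeZero (Monoid.exponent Fˣ) := ⟨Monoid.exponent_ne_zero_of_finite⟩
  have hcard : Nat.card (MulChar F ℂ) = Nat.card Fˣ :=
    MulChar.card_eq_card_units_of_hasEnoughRootsOfUnity F ℂ
  have htop : Subgroup.zpowers T = ⊤ := by
    rw [Subgroup.eq_top_iff']
    intro χ
    obtain ⟨n, rfl⟩ := hT χ
    exact Subgroup.npow_mem_zpowers T n
  have := Nat.card_zpowers T
  rw [htop] at this
  rw [← this, Nat.card_congr (Subgroup.topEquiv.toEquiv), hcard, Nat.card_eq_fintype_card,
    Fintype.card_units]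

lemma sq_classify (T : MulChar F ℂ) (hord : orderOf T = Fintype.card F - 1)
    {m : ℕ} (hm : 2 * m = Fintype.card F - 1) (hm0 : 0 < m)
    (ξ : MulChar F ℂ) (hξT : ∃ n : ℕ, ξ = T ^ n) (hξ : ξ ^ 2 = 1) :
    ξ = 1 ∨ ξ = T ^ m := by
  obtain ⟨n, rfl⟩ := hξT
  have h1 : orderOf T ∣ 2 * n := by
    apply orderOf_dvd_of_pow_eq_one
    rw [pow_mul', hξ]  -- (T^n)^2 : careful
  rw [hord, ← hm] at h1
  obtain ⟨j, hj⟩ := h1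
  rcases Nat.even_or_odd j with ⟨t, ht⟩ | ⟨t, ht⟩
  · left
    refine orderOf_dvd_iff_pow_eq_one.mp ?_
    rw [hord, ← hm]
    have hn : n = 2 * m * t := by
      have h' : 2 * n = 2 * (2 * m * t) := by rw [hj, ht]; ring
      omega
    exact ⟨t, hn⟩
  · right
    have hmod : n ≡ m [MOD orderOf T] := by
      rw [hord, ← hm]
      have hn : n = m + 2 * m * t := by
        have h' : 2 * n = 2 * (m + 2 * m * t) := by rw [hj, ht]; ring
        omega
      show n % (2 * m) = m % (2 * m)
      rw [hn, Nat.add_mul_mod_self_left]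
    exact (pow_eq_pow_iff_modEq.mpr hmod)

theorem stmt_3 (p e : ℕ) [Fact p.Prime] (hp : p ≠ 2) (he : 0 < e)
    (F : Type) [Field F] [Fintype F] [Algebra (ZMod p) F]
    (hq : Fintype.card F = p ^ e)
    (T : MulChar F ℂ) (hT : ∀ χ : MulChar F ℂ, ∃ n : ℕ, χ = T ^ n)
    (k : ℤ) :
    gaussT p F T (-k) * gaussT p F T (-(((Fintype.card F - 1) / 2 : ℕ) : ℤ) - k) =
      gaussT p F T (-(2 * k)) * (T ^ k) (4 : F) *
        gaussT p F T (((Fintype.card F - 1) / 2 : ℕ) : ℤ) := by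
  classical
  have hpp : p.Prime := Fact.out
  haveI : NeZero p := ⟨hpp.ne_zero⟩
  haveI : CharP F p := charP_of_injective_algebraMap (algebraMap (ZMod p) F).injective p
  have hrc : ringChar F = p := ringChar.eq F p
  have hc : ringChar F ≠ 2 := by rw [hrc]; exact hp
  have hc0 : ringChar F ≠ 0 := by rw [hrc]; exact hpp.ne_zero
  set q := Fintype.card F with hqdef
  set N := (q - 1) / 2 with hN
  have hqodd : Odd q := by rw [hq]; exact (hpp.odd_of_ne_two hp).pow
  have hq3 : 3 ≤ q := by
    have h2 : 2 ≤ p := hpp.two_le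
    have : p ≤ p ^ e := Nat.le_self_pow he.ne' p
    rw [hq]; omega
  obtain ⟨tq, htq⟩ := hqodd
  have hm : 2 * N = q - 1 := by omega
  have hm0 : 0 < N := by omega
  -- additive character
  set ψ : AddChar F ℂ :=
    (ZMod.stdAddChar (N := p)).compAddMonoidHom (Algebra.trace (ZMod p) F).toAddMonoidHom with hψ
  have hGT : ∀ m : ℤ, gaussT p F T m = gaussSum (T ^ m) ψ := by
    intro m
    refine Finset.sum_congr rfl fun x _ => ?_
    congr 1
    rw [hψ]
    rw [AddChar.compAddMonoidHom_apply, ZMod.stdAddChar_apply, ZMod.toCircle_apply]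
    simp [theta]
  -- order of T and quadratic character
  have hord : orderOf T = q - 1 := orderT T hT
  have hsq : ∀ ξ : MulChar F ℂ, ξ ^ 2 = 1 → ξ = 1 ∨ ξ = T ^ N := fun ξ h =>
    sq_classify T hord hm hm0 ξ (hT ξ) h
  have hφeq : (T ^ N : MulChar F ℂ) = quadC F := by
    rcases hsq (quadC F) quadC_sq with h | h
    · exact absurd h (quadC_ne_one hc)
    · exact h.symm
  have hsq' : ∀ ξ : MulChar F ℂ, ξ ^ 2 = 1 → ξ = 1 ∨ ξ = quadC F := by
    intro ξ h; rcases hsq ξ h with h' | h'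
    · exact Or.inl h'
    · exact Or.inr (h'.trans hφeq)
  have hφ2 : (T ^ N : MulChar F ℂ) ^ 2 = 1 := by rw [hφeq]; exact quadC_sq
  set χ : MulChar F ℂ := T ^ (-k) with hχ
  -- exponent bookkeeping
  have e1 : (T ^ (-(N : ℤ) - k) : MulChar F ℂ) = χ * T ^ N := by
    rw [sub_eq_add_neg, zpow_add, hχ, mul_comm]
    congr 1
    rw [zpow_neg, zpow_natCast]
    exact inv_eq_of_mul_eq_one_left (by rw [← pow_two]; exact hφ2)
  have e2 : (T ^ (-(2 * k)) : MulChar F ℂ) = χ ^ 2 := by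
    rw [hχ, ← zpow_natCast (T ^ (-k)) 2, ← zpow_mul]
    congr 1; ring
  have e3 : (T ^ ((N : ℕ) : ℤ) : MulChar F ℂ) = T ^ N := zpow_natCast T N
  have e4 : (T ^ k) (4 : F) = χ 4⁻¹ := by
    have : (T ^ k : MulChar F ℂ) = χ⁻¹ := by rw [hχ, ← zpow_neg, neg_neg]
    rw [this, MulChar.inv_apply' χ 4]
  rw [hGT, hGT, hGT, hGT, e1, e2, e3, e4, hφeq, mul_comm χ (quadC F), mul_comm (quadC F) χ]
  exact hd_product hc hc0 ψ χ hsq'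
end

section
/- Let q be a prime power with q ≡ 1 (mod 12) and T a generator of the character group of F_q^*. Then binom(T^{(q-1)/3}, T^{(q-1)/4}) · binom(T^{2(q-1)/3}, T^{3(q-1)/4}) = T^{(q-1)/3}(-1) · T^{(q-1)/4}(-1) / (q · T^{(q-1)/12}(-1)), where binom(A,B) = (B(-1)/q) J(A,B̄) is the normalized Jacobi sum. -/
open Finset

theorem stmt_7 (p e : ℕ) [Fact p.Prime] (he : 0 < e)
    (F : Type) [Field F] [Fintype F]
    (hq : Fintype.card F = p ^ e) (h12 : Fintype.card F % 12 = 1)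
    (T : MulChar F ℂ) (hT : ∀ χ : MulChar F ℂ, ∃ n : ℕ, χ = T ^ n) :
    binomC F (T ^ ((Fintype.card F - 1) / 3)) (T ^ ((Fintype.card F - 1) / 4)) *
        binomC F (T ^ (2 * ((Fintype.card F - 1) / 3))) (T ^ (3 * ((Fintype.card F - 1) / 4))) =
      (T ^ ((Fintype.card F - 1) / 3)) (-1 : F) * (T ^ ((Fintype.card F - 1) / 4)) (-1 : F) /
        ((Fintype.card F : ℂ) * (T ^ ((Fintype.card F - 1) / 12)) (-1 : F)) := by
  have hq2 : 2 ≤ Fintype.card F := Fintype.one_lt_card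
  obtain ⟨k, hk⟩ : 12 ∣ Fintype.card F - 1 := by omega
  have hk1 : 1 ≤ k := by omega
  -- the order of T is q - 1
  have hexp : NeZero ((Monoid.exponent Fˣ : ℂ)) :=
    ⟨by exact_mod_cast Monoid.exponent_ne_zero_of_finite (G := Fˣ)⟩
  classical
  have horder : orderOf T = Fintype.card F - 1 := by
    have h1 : ∀ χ : MulChar F ℂ, χ ∈ Subgroup.zpowers T := fun χ => by
      obtain ⟨n, hn⟩ := hT χ
      exact ⟨(n : ℤ), by simp [hn]⟩
    rw [orderOf_eq_card_of_forall_mem_zpowers h1,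
      MulChar.card_eq_card_units_of_hasEnoughRootsOfUnity, Nat.card_eq_fintype_card,
      Fintype.card_units]
  have hordu : orderOf (T ^ k) = 12 := by
    rw [orderOf_pow, horder, hk, Nat.gcd_eq_right ⟨12, by ring⟩,
      Nat.mul_div_cancel _ (by omega)]
  set u : MulChar F ℂ := T ^ k with hu
  have hpow : ∀ m : ℕ, u ^ m = 1 ↔ 12 ∣ m := fun m => by
    rw [← hordu, orderOf_dvd_iff_pow_eq_one]
  have hu12 : u ^ 12 = 1 := (hpow 12).mpr dvd_rfl
  -- rewrite exponents
  have e1 : (Fintype.card F - 1) / 3 = k * 4 := by omega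
  have e2 : (Fintype.card F - 1) / 4 = k * 3 := by omega
  have e3 : 2 * ((Fintype.card F - 1) / 3) = k * 8 := by omega
  have e4 : 3 * ((Fintype.card F - 1) / 4) = k * 9 := by omega
  have e5 : (Fintype.card F - 1) / 12 = k := by omega
  rw [e3, e4, e1, e2, e5, pow_mul, pow_mul, pow_mul, pow_mul, ← hu]
  -- Jacobi sum identity
  have hchar : ringChar ℂ ≠ ringChar F := by
    rw [ringChar.eq_zero]
    exact (CharP.char_ne_zero_of_finite F (ringChar F)).symm
  have h4 : u ^ 4 ≠ 1 := fun h => by have := (hpow 4).mp h; omega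
  have h3 : (u ^ 3)⁻¹ ≠ 1 := fun h => by
    have : u ^ 3 = 1 := by rwa [inv_eq_one] at h
    have := (hpow 3).mp this; omega
  have h43 : u ^ 4 * (u ^ 3)⁻¹ ≠ 1 := by
    have huu : u ^ 4 * (u ^ 3)⁻¹ = u := by group
    rw [huu]
    intro h
    have := (hpow 1).mp (by rwa [pow_one])
    omega
  have hJ := jacobiSum_mul_jacobiSum_inv hchar h4 h3 h43
  rw [inv_inv] at hJ
  have h8 : u ^ 8 = (u ^ 4)⁻¹ := by
    apply eq_inv_of_mul_eq_one_left
    rw [← pow_add]; exact hu12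
  have h9 : (u ^ 9)⁻¹ = u ^ 3 := by
    apply inv_eq_of_mul_eq_one_left
    rw [← pow_add]; exact hu12
  -- character values at -1
  set c : ℂ := u (-1) with hc
  have hcc : c * c = 1 := by
    rw [hc, ← map_mul, neg_mul_neg, one_mul, MulChar.map_one]
  have hc0 : c ≠ 0 := fun h => by simp [h] at hcc
  have hq0 : ((Fintype.card F : ℂ)) ≠ 0 := by
    exact_mod_cast (by omega : Fintype.card F ≠ 0)
  have hv : ∀ m : ℕ, m ≠ 0 → (u ^ m) (-1 : F) = c ^ m := fun m hm =>
    MulChar.pow_apply' u hm (-1)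
  simp only [binomC, h8, h9, hv 3 (by norm_num), hv 4 (by norm_num), hv 9 (by norm_num),
    pow_one]
  rw [show c ^ 3 / (Fintype.card F : ℂ) * jacobiSum (u ^ 4) (u ^ 3)⁻¹ *
      (c ^ 9 / (Fintype.card F : ℂ) * jacobiSum (u ^ 4)⁻¹ (u ^ 3)) =
      (c * c) ^ 6 * (jacobiSum (u ^ 4) (u ^ 3)⁻¹ * jacobiSum (u ^ 4)⁻¹ (u ^ 3)) /
        ((Fintype.card F : ℂ) * (Fintype.card F : ℂ)) by ring,
    hJ, hcc, one_pow, one_mul]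
  field_simp
  linear_combination (-(c^4:ℂ)-c^2-1)*hcc
end

section
/- Let q be a prime power with q ≡ 1 (mod 4) and T a generator of the character group of F_q^*. Then T^{(q-1)/4}(-1) = T^{(q-1)/2}(2). -/
open Finset

theorem stmt_8 (p e : ℕ) [Fact p.Prime] (he : 0 < e)
    (F : Type) [Field F] [Fintype F]
    (hq : Fintype.card F = p ^ e) (h4 : Fintype.card F % 4 = 1)
    (T : MulChar F ℂ) (hT : ∀ χ : MulChar F ℂ, ∃ n : ℕ, χ = T ^ n) :
    (T ^ ((Fintype.card F - 1) / 4)) (-1 : F) = (T ^ ((Fintype.card F - 1) / 2)) (2 : F) := by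
  set q := Fintype.card F with hqdef
  have hq1 : 1 < q := Fintype.one_lt_card
  -- ring char not 2
  have hchar : ringChar F ≠ 2 := by
    intro h
    have := FiniteField.even_card_of_char_two h
    omega
  have h2ne : (2 : F) ≠ 0 := Ring.two_ne_zero hchar
  have hne : (-1 : F) ≠ 1 := by
    intro h
    apply h2ne
    linear_combination -h
  -- T (-1) = -1
  have hTm1 : T (-1) = -1 := by
    have hsq : T (-1) * T (-1) = 1 := by
      rw [← map_mul]; norm_num
    rcases mul_self_eq_one_iff.mp hsq with h | h
    · exfalso
      obtain ⟨χ, hχ⟩ := MulChar.exists_apply_ne_one_of_hasEnoughRootsOfUnity F ℂ hne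
      obtain ⟨n, rfl⟩ := hT χ
      rcases Nat.eq_zero_or_pos n with rfl | hn
      · simp [MulChar.one_apply (isUnit_one.neg)] at hχ
      · rw [MulChar.pow_apply' T hn.ne' (-1), h, one_pow] at hχ
        exact hχ rfl
    · exact h
  -- cases on q % 8
  have h8 : q % 8 = 1 ∨ q % 8 = 5 := by omega
  have hLHS : (T ^ ((q - 1) / 4)) (-1 : F) = (-1 : ℂ) ^ ((q - 1) / 4) := by
    rcases Nat.eq_zero_or_pos ((q - 1) / 4) with h | h
    · rw [h]; simp [MulChar.one_apply (isUnit_one.neg)]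
    · rw [MulChar.pow_apply' T h.ne' (-1), hTm1]
  have hhalf : (q - 1) / 2 ≠ 0 := by omega
  have hRHS : (T ^ ((q - 1) / 2)) (2 : F) = T ((2 : F) ^ (q / 2)) := by
    have h' : (q - 1) / 2 = q / 2 := by omega
    rw [MulChar.pow_apply' T hhalf (2 : F), ← map_pow, h']
  rcases h8 with h | h
  · -- q ≡ 1 mod 8 : both sides 1
    have hev : Even ((q - 1) / 4) := by rw [Nat.even_iff]; omega
    have hsq2 : IsSquare (2 : F) := by
      rw [FiniteField.isSquare_two_iff]; omega
    have h2pow : (2 : F) ^ (q / 2) = 1 :=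
      (FiniteField.isSquare_iff hchar h2ne).mp hsq2
    rw [hLHS, hRHS, h2pow, hev.neg_one_pow, map_one]
  · -- q ≡ 5 mod 8 : both sides -1
    have hod : Odd ((q - 1) / 4) := by
      rw [Nat.odd_iff]; omega
    have hsq2 : ¬ IsSquare (2 : F) := by
      rw [FiniteField.isSquare_two_iff]; omega
    have h2pow : (2 : F) ^ (q / 2) = -1 := by
      rcases FiniteField.pow_dichotomy hchar h2ne with h' | h'
      · exact absurd ((FiniteField.isSquare_iff hchar h2ne).mpr h') hsq2
      · exact h'
    rw [hLHS, hRHS, h2pow, hod.neg_one_pow, hTm1]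
end

section
/- For multiplicative characters A, B, C of F_q and x ∈ F_q with x ≠ 0, 1, Greene's hypergeometric series satisfies ₂F₁(A,B;C|x)_q = A(-1) · ₂F₁(A,B; A·B·C̄ | 1−x)_q. -/
open Finset

namespace GreeneAux

set_option linter.unusedSectionVars false
open scoped Classical

variable {F : Type} [Field F] [Fintype F]

lemma mc_ne_zero (χ : MulChar F ℂ) {a : F} (ha : a ≠ 0) : χ a ≠ 0 := by
  intro h
  have := map_mul χ a a⁻¹
  rw [mul_inv_cancel₀ ha, map_one χ, h, zero_mul] at this
  exact one_ne_zero this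

lemma mc_inv_mul (χ : MulChar F ℂ) {a : F} (ha : a ≠ 0) : χ⁻¹ a * χ a = 1 := by
  rw [MulChar.inv_apply_eq_inv', inv_mul_cancel₀ (mc_ne_zero χ ha)]

lemma mc_apply_inv (χ : MulChar F ℂ) (a : F) : χ a⁻¹ = χ⁻¹ a :=
  (MulChar.inv_apply' χ a).symm

lemma mc_neg_one_sq (χ : MulChar F ℂ) : χ (-1) * χ (-1) = 1 := by
  rw [← map_mul χ]; norm_num

lemma mc_inv_neg_one (χ : MulChar F ℂ) : χ⁻¹ (-1) = χ (-1) := by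
  rw [MulChar.inv_apply_eq_inv', inv_eq_of_mul_eq_one_left (mc_neg_one_sq χ)]

lemma mc_pow_apply (T : MulChar F ℂ) (n : ℕ) {a : F} (ha : a ≠ 0) :
    (T ^ n) a = T a ^ n := by
  rcases Nat.eq_zero_or_pos n with h | h
  · subst h
    simp [MulChar.one_apply (Ne.isUnit ha)]
  · exact MulChar.pow_apply' T h.ne' a

lemma card_cast_sub_one : ((Fintype.card F - 1 : ℕ) : ℂ) = (Fintype.card F : ℂ) - 1 := by
  have h : 1 ≤ Fintype.card F := Fintype.card_pos
  push_cast [Nat.cast_sub h]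
  ring

lemma orth (T : MulChar F ℂ) (hT : ∀ χ : MulChar F ℂ, ∃ n : ℕ, χ = T ^ n) (w : F) :
    ∑ m ∈ Finset.range (Fintype.card F - 1), (T ^ m) w
      = if w = 1 then (Fintype.card F : ℂ) - 1 else 0 := by
  by_cases hw0 : w = 0
  · subst hw0
    rw [if_neg (zero_ne_one)]
    exact Finset.sum_eq_zero fun m _ => MulChar.map_nonunit _ not_isUnit_zero
  · have hrw : ∀ m ∈ Finset.range (Fintype.card F - 1), (T ^ m) w = T w ^ m :=
      fun m _ => mc_pow_apply T m hw0
    rw [Finset.sum_congr rfl hrw]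
    by_cases hw1 : w = 1
    · subst hw1
      simp [map_one, ← card_cast_sub_one]
    · rw [if_neg hw1]
      have hTw : T w ≠ 1 := by
        intro h
        obtain ⟨χ, hχ⟩ := MulChar.exists_apply_ne_one_of_hasEnoughRootsOfUnity F ℂ hw1
        obtain ⟨n, rfl⟩ := hT χ
        rw [mc_pow_apply T n hw0, h, one_pow] at hχ
        exact hχ rfl
      rw [geom_sum_eq hTw]
      have : T w ^ (Fintype.card F - 1) = 1 := by
        rw [← map_pow, FiniteField.pow_card_sub_one_eq_one w hw0, map_one]
      rw [this, sub_self, zero_div]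

lemma Ssum (T : MulChar F ℂ) (hT : ∀ χ : MulChar F ℂ, ∃ n : ℕ, χ = T ^ n) (u v : F) :
    ∑ m ∈ Finset.range (Fintype.card F - 1), (T ^ m) u * ((T ^ m) v)⁻¹
      = if u = v ∧ v ≠ 0 then (Fintype.card F : ℂ) - 1 else 0 := by
  by_cases hv : v = 0
  · subst hv
    rw [if_neg (by tauto)]
    refine Finset.sum_eq_zero fun m _ => ?_
    rw [show ((T ^ m) (0:F)) = 0 from MulChar.map_nonunit _ not_isUnit_zero, inv_zero, mul_zero]
  · have hrw : ∀ m ∈ Finset.range (Fintype.card F - 1),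
        (T ^ m) u * ((T ^ m) v)⁻¹ = (T ^ m) (u * v⁻¹) := by
      intro m _
      rw [map_mul, mc_apply_inv, MulChar.inv_apply_eq_inv']
    rw [Finset.sum_congr rfl hrw, orth T hT]
    have : u * v⁻¹ = 1 ↔ u = v ∧ v ≠ 0 := by
      constructor
      · intro h
        have : u = v := by field_simp at h; simpa using h
        exact ⟨this, hv⟩
      · rintro ⟨rfl, -⟩
        exact mul_inv_cancel₀ hv
    simp only [this]

lemma binom_prod (T : MulChar F ℂ) (A B C : MulChar F ℂ) (m : ℕ) (x : F) :
    binomC F (A * T ^ m) (T ^ m) * binomC F (B * T ^ m) (C * T ^ m) * (T ^ m) x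
      = C (-1) / (Fintype.card F : ℂ) ^ 2 *
        ∑ s : F, ∑ t : F, (A s * (B t * C⁻¹ (1 - t))) *
          ((T ^ m) (s * t * x) * ((T ^ m) ((1 - s) * (1 - t)))⁻¹) := by
  have hcm : (T ^ m) (-1) * (C * T ^ m) (-1) = C (-1) := by
    rw [MulChar.mul_apply]
    have h2 := mc_neg_one_sq (T ^ m)
    linear_combination C (-1) * h2
  have h : binomC F (A * T ^ m) (T ^ m) * binomC F (B * T ^ m) (C * T ^ m) * (T ^ m) x
      = ((T ^ m) (-1) * (C * T ^ m) (-1)) * (T ^ m) x / (Fintype.card F : ℂ) ^ 2 *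
        ((∑ s : F, (A * T ^ m) s * ((T ^ m)⁻¹) (1 - s)) *
         (∑ t : F, (B * T ^ m) t * ((C * T ^ m)⁻¹) (1 - t))) := by
    unfold binomC jacobiSum
    ring
  rw [h, hcm]
  rw [Finset.sum_mul_sum Finset.univ Finset.univ
    (fun s => (A * T ^ m) s * ((T ^ m)⁻¹) (1 - s))
    (fun t => (B * T ^ m) t * ((C * T ^ m)⁻¹) (1 - t))]
  simp only [Finset.mul_sum]
  refine Finset.sum_congr rfl fun s _ => ?_
  refine Finset.sum_congr rfl fun t _ => ?_
  rw [MulChar.mul_apply, MulChar.mul_apply, mul_inv, MulChar.mul_apply,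
    MulChar.inv_apply_eq_inv', MulChar.inv_apply_eq_inv', MulChar.inv_apply_eq_inv',
    show s * t * x = (s * t) * x from rfl, map_mul, map_mul, map_mul, mul_inv]
  ring

lemma inner_eval (A B C : MulChar F ℂ) {x : F} (hx0 : x ≠ 0) (t : F) :
    (B t * C⁻¹ (1 - t)) *
      ∑ s : F, A s * (if s * t * x = (1 - s) * (1 - t) ∧ (1 - s) * (1 - t) ≠ 0
          then (Fintype.card F : ℂ) - 1 else 0)
      = ((Fintype.card F : ℂ) - 1) *
        (B t * C⁻¹ (1 - t) * (A (1 - t) * A⁻¹ (1 - t + t * x))) := by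
  by_cases ht0 : t = 0
  · subst ht0
    rw [B.map_zero]
    ring
  by_cases ht1 : t = 1
  · subst ht1
    rw [sub_self, MulChar.map_zero]
    ring
  have h1t : (1 : F) - t ≠ 0 := sub_ne_zero.mpr (Ne.symm ht1)
  by_cases he : (1 : F) - t + t * x = 0
  · have hsum : ∀ s : F, A s * (if s * t * x = (1 - s) * (1 - t) ∧ (1 - s) * (1 - t) ≠ 0
          then (Fintype.card F : ℂ) - 1 else 0) = 0 := by
      intro s
      rw [if_neg, mul_zero]
      rintro ⟨h1, -⟩
      exact h1t (by linear_combination s * he - h1)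
    rw [Finset.sum_congr rfl fun s _ => hsum s, Finset.sum_const, smul_zero, he,
      MulChar.map_zero]
    ring
  · have hcond : ∀ s : F, (s * t * x = (1 - s) * (1 - t) ∧ (1 - s) * (1 - t) ≠ 0)
        ↔ s = (1 - t) * ((1 : F) - t + t * x)⁻¹ := by
      intro s
      constructor
      · rintro ⟨h1, -⟩
        have hse : s * ((1 : F) - t + t * x) = 1 - t := by linear_combination h1
        field_simp
        linear_combination hse
      · rintro rfl
        have hs1 : (1 : F) - (1 - t) * ((1 : F) - t + t * x)⁻¹
            = t * x * ((1 : F) - t + t * x)⁻¹ := by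
          field_simp
          ring
        constructor
        · field_simp
          ring
        · rw [hs1]
          exact mul_ne_zero (mul_ne_zero (mul_ne_zero ht0 hx0) (inv_ne_zero he)) h1t
    have : ∀ s : F, A s * (if s * t * x = (1 - s) * (1 - t) ∧ (1 - s) * (1 - t) ≠ 0
          then (Fintype.card F : ℂ) - 1 else 0)
        = if s = (1 - t) * ((1 : F) - t + t * x)⁻¹
            then A s * ((Fintype.card F : ℂ) - 1) else 0 := by
      intro s
      by_cases hs : s = (1 - t) * ((1 : F) - t + t * x)⁻¹
      · rw [if_pos ((hcond s).mpr hs), if_pos hs]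
      · rw [if_neg (fun hc => hs ((hcond s).mp hc)), if_neg hs, mul_zero]
    rw [Finset.sum_congr rfl fun s _ => this s, Finset.sum_ite_eq' Finset.univ,
      if_pos (Finset.mem_univ _)]
    rw [map_mul, mc_apply_inv]
    ring

lemma key (T : MulChar F ℂ) (hT : ∀ χ : MulChar F ℂ, ∃ n : ℕ, χ = T ^ n)
    (A B C : MulChar F ℂ) {x : F} (hx0 : x ≠ 0) :
    hypF21 F T A B C x
      = C (-1) / (Fintype.card F : ℂ) *
        ∑ t : F, B t * C⁻¹ (1 - t) * (A (1 - t) * A⁻¹ (1 - t + t * x)) := by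
  have hq : (Fintype.card F : ℂ) ≠ 0 := by
    exact_mod_cast (Fintype.card_ne_zero : Fintype.card F ≠ 0)
  have hq1 : (Fintype.card F : ℂ) - 1 ≠ 0 := by
    have h2 : (1:ℕ) < Fintype.card F := Fintype.one_lt_card
    intro h
    have : (Fintype.card F : ℂ) = 1 := by linear_combination h
    exact absurd (Nat.cast_injective (R := ℂ) (by exact_mod_cast this)) (by omega)
  have step1 : hypF21 F T A B C x
      = (Fintype.card F : ℂ) / ((Fintype.card F : ℂ) - 1) * (C (-1) / (Fintype.card F : ℂ) ^ 2 *
          ∑ s : F, ∑ t : F, (A s * (B t * C⁻¹ (1 - t))) *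
            ∑ m ∈ Finset.range (Fintype.card F - 1),
              (T ^ m) (s * t * x) * ((T ^ m) ((1 - s) * (1 - t)))⁻¹) := by
    unfold hypF21
    rw [Finset.sum_congr rfl fun m _ => binom_prod T A B C m x]
    rw [← Finset.mul_sum]
    congr 2
    rw [Finset.sum_comm]
    refine Finset.sum_congr rfl fun s _ => ?_
    rw [Finset.sum_comm]
    refine Finset.sum_congr rfl fun t _ => ?_
    rw [← Finset.mul_sum]
  rw [step1]
  have step2 : ∀ s t : F,
      (A s * (B t * C⁻¹ (1 - t))) *
        ∑ m ∈ Finset.range (Fintype.card F - 1),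
          (T ^ m) (s * t * x) * ((T ^ m) ((1 - s) * (1 - t)))⁻¹
      = (A s * (B t * C⁻¹ (1 - t))) *
          (if s * t * x = (1 - s) * (1 - t) ∧ (1 - s) * (1 - t) ≠ 0
            then (Fintype.card F : ℂ) - 1 else 0) := by
    intro s t
    rw [Ssum T hT]
  rw [Finset.sum_congr rfl fun s _ => Finset.sum_congr rfl fun t _ => step2 s t]
  rw [Finset.sum_comm]
  have step3 : ∀ t : F,
      (∑ s : F, (A s * (B t * C⁻¹ (1 - t))) *
          (if s * t * x = (1 - s) * (1 - t) ∧ (1 - s) * (1 - t) ≠ 0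
            then (Fintype.card F : ℂ) - 1 else 0))
      = ((Fintype.card F : ℂ) - 1) *
          (B t * C⁻¹ (1 - t) * (A (1 - t) * A⁻¹ (1 - t + t * x))) := by
    intro t
    rw [← inner_eval A B C hx0 t, Finset.mul_sum]
    exact Finset.sum_congr rfl fun s _ => by ring
  rw [Finset.sum_congr rfl fun t _ => step3 t, ← Finset.mul_sum]
  field_simp
  ring_nf
  congr 1
  refine Finset.sum_congr rfl fun t _ => ?_
  ring

lemma subst_sum (A B C : MulChar F ℂ) (x : F) :
    ∑ t : F, B t * C⁻¹ (1 - t) * (A (1 - t) * A⁻¹ (1 - t + t * x))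
      = ∑ y : F, B (-1) * (B y * B⁻¹ (1 - y) * (C (1 - y) * A⁻¹ (1 - y * x))) := by
  rw [← Finset.sum_erase_add _ _ (Finset.mem_univ (1:F)),
      ← Finset.sum_erase_add _ (fun y => B (-1) * (B y * B⁻¹ (1 - y) * (C (1 - y) * A⁻¹ (1 - y * x))))
        (Finset.mem_univ (1:F))]
  have hf1 : B (1:F) * C⁻¹ (1 - 1) * (A (1 - 1) * A⁻¹ (1 - 1 + 1 * x)) = 0 := by
    rw [sub_self, MulChar.map_zero]; ring
  have hg1 : B (-1) * (B (1:F) * B⁻¹ (1 - 1) * (C (1 - 1) * A⁻¹ (1 - 1 * x))) = 0 := by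
    rw [sub_self, MulChar.map_zero]; ring
  rw [hf1, hg1, add_zero, add_zero]
  have hmem : ∀ a : F, a ∈ Finset.univ.erase (1:F) → a * (a - 1)⁻¹ ∈ Finset.univ.erase (1:F) := by
    intro a ha
    have ha1 : a - 1 ≠ 0 := sub_ne_zero.mpr (Finset.mem_erase.mp ha).1
    refine Finset.mem_erase.mpr ⟨?_, Finset.mem_univ _⟩
    intro h
    field_simp at h
    exact one_ne_zero (by linear_combination h : (1:F) = 0)
  have hinv : ∀ a : F, a ∈ Finset.univ.erase (1:F) → (a * (a - 1)⁻¹) * (a * (a - 1)⁻¹ - 1)⁻¹ = a := by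
    intro a ha
    have ha1 : a - 1 ≠ 0 := sub_ne_zero.mpr (Finset.mem_erase.mp ha).1
    have h2 : a * (a - 1)⁻¹ - 1 = (a - 1)⁻¹ := by field_simp; ring
    rw [h2, inv_inv]
    field_simp
  refine Finset.sum_nbij' (i := fun t => t * (t - 1)⁻¹) (j := fun t => t * (t - 1)⁻¹)
    hmem hmem hinv hinv ?_
  intro t ht
  have hd : t - 1 ≠ 0 := sub_ne_zero.mpr (Finset.mem_erase.mp ht).1
  have hy1 : (1:F) - t * (t - 1)⁻¹ = -1 * (t - 1)⁻¹ := by field_simp; ring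
  have hy2 : (1:F) - (t * (t - 1)⁻¹) * x = -1 * ((1 - t + t * x) * (t - 1)⁻¹) := by
    field_simp; ring
  have ht1 : (1:F) - t = -1 * (t - 1) := by ring
  rw [hy1, hy2, ht1, map_mul B t, mc_apply_inv B, map_mul B⁻¹, mc_apply_inv B⁻¹, inv_inv,
    mc_inv_neg_one B, map_mul C (-1), map_mul C⁻¹ (-1), mc_inv_neg_one C, mc_apply_inv C,
    map_mul A (-1), map_mul A⁻¹ (-1), mc_inv_neg_one A, map_mul A⁻¹ _ ((t-1)⁻¹),
    mc_apply_inv A⁻¹, inv_inv,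
    show A⁻¹ (-1 * (t - 1) + t * x) = A⁻¹ (1 - t + t * x) by rw [show (-1 * (t - 1) + t * x : F) = 1 - t + t * x by ring]]
  have hb := mc_neg_one_sq B
  have hbd := mc_inv_mul B hd
  linear_combination (- (B t * (C (-1) * C⁻¹ (t-1)) * (A (-1) * A (t-1) * A⁻¹ (1 - t + t * x))) * (B⁻¹ (t-1) * B (t-1))) * hb - (B t * (C (-1) * C⁻¹ (t-1)) * (A (-1) * A (t-1) * A⁻¹ (1 - t + t * x))) * hbd

end GreeneAux

theorem stmt_11 (F : Type) [Field F] [Fintype F]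
    (T : MulChar F ℂ) (hT : ∀ χ : MulChar F ℂ, ∃ n : ℕ, χ = T ^ n)
    (A B C : MulChar F ℂ) (x : F) (hx0 : x ≠ 0) (hx1 : x ≠ 1) :
    hypF21 F T A B C x = A (-1) * hypF21 F T A B (A * B * C⁻¹) (1 - x) := by
  have h1x : (1:F) - x ≠ 0 := sub_ne_zero.mpr (Ne.symm hx1)
  rw [GreeneAux.key T hT A B C hx0, GreeneAux.key T hT A B (A * B * C⁻¹) h1x]
  have hterm : ∀ t : F,
      B t * (A * B * C⁻¹)⁻¹ (1 - t) * (A (1 - t) * A⁻¹ (1 - t + t * (1 - x)))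
        = B t * B⁻¹ (1 - t) * (C (1 - t) * A⁻¹ (1 - t * x)) := by
    intro t
    rw [show (1:F) - t + t * (1 - x) = 1 - t * x by ring,
      mul_inv, mul_inv, inv_inv, MulChar.mul_apply, MulChar.mul_apply]
    by_cases h : (1:F) - t = 0
    · simp only [h, MulChar.map_zero]
      ring
    · have hh := GreeneAux.mc_inv_mul A h
      linear_combination (B t * (B⁻¹ (1 - t) * C (1 - t)) * A⁻¹ (1 - t * x)) * hh
  rw [Finset.sum_congr rfl fun t _ => hterm t]
  rw [GreeneAux.subst_sum A B C x, ← Finset.mul_sum]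
  have hA := GreeneAux.mc_neg_one_sq A
  have hABC : (A * B * C⁻¹) (-1) = A (-1) * (B (-1) * C (-1)) := by
    rw [MulChar.mul_apply, MulChar.mul_apply, GreeneAux.mc_inv_neg_one]
    ring
  rw [hABC]
  linear_combination (- B (-1) * C (-1) *
      (∑ t : F, B t * B⁻¹ (1 - t) * (C (1 - t) * A⁻¹ (1 - t * x))) /
      (Fintype.card F : ℂ)) * hA
end

section
/- For multiplicative characters A, B, C of F_q and x ∈ F_q^*, Greene's hypergeometric series satisfies ₂F₁(A,B;C|x)_q = (ABC)(-1) · Ā(x) · ₂F₁(A, A·C̄; A·B̄ | 1/x)_q. -/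
open Finset

lemma neg_one_sq' {F : Type} [Field F] [Fintype F] (X : MulChar F ℂ) :
    X (-1) * X (-1) = 1 := by
  rw [← map_mul, neg_mul_neg, one_mul, map_one]

lemma binom_transform (F : Type) [Field F] [Fintype F] (X Y : MulChar F ℂ) :
    binomC F X Y = (X * Y) (-1) * binomC F Y⁻¹ X⁻¹ := by
  unfold binomC
  rw [inv_inv, jacobiSum_comm, MulChar.mul_apply, MulChar.inv_apply', inv_neg, inv_one]
  have h2 := neg_one_sq' X

  linear_combination (-(Y (-1) * jacobiSum Y⁻¹ X / (Fintype.card F : ℂ))) * h2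

lemma periodic_shift (N : ℕ) (g : ℕ → ℂ) (hg : ∀ m, g (m + N) = g m) (c : ℕ) :
    ∑ i ∈ range N, g (i + c) = ∑ i ∈ range N, g i := by
  induction c with
  | zero => simp
  | succ c ih =>
    have h1 := Finset.sum_range_succ' (fun i => g (i + c)) N
    have h2 := Finset.sum_range_succ (fun i => g (i + c)) N
    have key : ∑ i ∈ range N, g (i + (c + 1)) = ∑ i ∈ range N, g (i + c) := by
      have : ∀ i, g (i + (c + 1)) = g ((i + 1) + c) := by intro i; ring_nf
      simp_rw [this]
      have hNc : g (N + c) = g (0 + c) := by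
        rw [zero_add, add_comm N c, hg c]
      linear_combination hNc - h1 + h2
    rw [key, ih]

lemma pow_mod_lemma (F : Type) [Field F] [Fintype F] (T : MulChar F ℂ) (N : ℕ)
    (hTN : T ^ N = 1) (k : ℕ) : T ^ (k + N) = T ^ k := by
  rw [pow_add, hTN, mul_one]

lemma reindex_sum (F : Type) [Field F] [Fintype F] (T : MulChar F ℂ) (N : ℕ)
    (hTN : T ^ N = 1) (a : ℕ) (h : MulChar F ℂ → ℂ) :
    ∑ m ∈ range N, h ((T ^ a * T ^ m)⁻¹) = ∑ m ∈ range N, h (T ^ m) := by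
  have hper : ∀ k, (fun k => h ((T ^ k)⁻¹)) (k + N) = (fun k => h ((T ^ k)⁻¹)) k := by
    intro k; simp only [pow_add, hTN, mul_one]
  calc ∑ m ∈ range N, h ((T ^ a * T ^ m)⁻¹)
      = ∑ m ∈ range N, (fun k => h ((T ^ k)⁻¹)) (m + a) := by
        refine Finset.sum_congr rfl fun m _ => ?_
        simp [pow_add, mul_comm]
    _ = ∑ m ∈ range N, h ((T ^ m)⁻¹) := periodic_shift N (fun k => h ((T ^ k)⁻¹)) hper a
    _ = ∑ m ∈ range N, h ((T ^ (N - 1 - m))⁻¹) := (Finset.sum_range_reflect _ N).symm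
    _ = ∑ m ∈ range N, (fun k => h (T ^ k)) (m + 1) := by
        refine Finset.sum_congr rfl fun m hm => ?_
        simp only [mem_range] at hm
        have : T ^ (N - 1 - m) = (T ^ (m + 1))⁻¹ := by
          apply eq_inv_of_mul_eq_one_left
          rw [← pow_add]
          have : N - 1 - m + (m + 1) = N := by omega
          rw [this, hTN]
        rw [this, inv_inv]
    _ = ∑ m ∈ range N, h (T ^ m) := periodic_shift N (fun k => h (T ^ k)) (fun k => by simp [pow_add, hTN]) 1

lemma termwise (F : Type) [Field F] [Fintype F] (A B C χ : MulChar F ℂ) (x : F) (hx : x ≠ 0) :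
    (A * B * C) (-1) * A⁻¹ x *
      (binomC F (A * (A * χ)⁻¹) ((A * χ)⁻¹) *
        binomC F ((A * C⁻¹) * (A * χ)⁻¹) ((A * B⁻¹) * (A * χ)⁻¹) * ((A * χ)⁻¹) x⁻¹)
    = binomC F (A * χ) χ * binomC F (B * χ) (C * χ) * χ x := by
  have e1 : A * (A * χ)⁻¹ = χ⁻¹ := by rw [mul_inv]; exact mul_inv_cancel_left A χ⁻¹
  have e2 : (A * C⁻¹) * (A * χ)⁻¹ = (C * χ)⁻¹ := by
    rw [mul_inv, mul_inv]
    simp [mul_comm, mul_left_comm, mul_assoc]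
  have e3 : (A * B⁻¹) * (A * χ)⁻¹ = (B * χ)⁻¹ := by
    rw [mul_inv, mul_inv]
    simp [mul_comm, mul_left_comm, mul_assoc]
  rw [e1, e2, e3, binom_transform F (A * χ) χ, binom_transform F (B * χ) (C * χ)]
  simp only [MulChar.mul_apply, MulChar.inv_apply', inv_neg, inv_one, inv_inv]
  have h1 : A x⁻¹ * A x = 1 := by rw [← map_mul, inv_mul_cancel₀ hx, map_one]
  have hχ : χ (-1) * χ (-1) = 1 := neg_one_sq' χ
  have hχ4 : χ (-1) * χ (-1) * (χ (-1) * χ (-1)) = 1 := by rw [hχ, mul_one]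
  set b1 := binomC F χ⁻¹ (A * χ)⁻¹
  set b2 := binomC F (C * χ)⁻¹ (B * χ)⁻¹
  set K := A (-1) * B (-1) * C (-1) * b1 * b2 * χ x
  linear_combination K * h1 - K * hχ4

theorem stmt_12 (F : Type) [Field F] [Fintype F]
    (T : MulChar F ℂ) (hT : ∀ χ : MulChar F ℂ, ∃ n : ℕ, χ = T ^ n)
    (A B C : MulChar F ℂ) (x : F) (hx : x ≠ 0) :
    hypF21 F T A B C x =
      (A * B * C) (-1) * A⁻¹ x * hypF21 F T A (A * C⁻¹) (A * B⁻¹) x⁻¹ := by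
  obtain ⟨a, ha⟩ := hT A
  have hTN : T ^ (Fintype.card F - 1) = 1 := by
    letI : Fintype Fˣ := Fintype.ofFinite _
    have hcard : Fintype.card Fˣ = Fintype.card F - 1 := by
      rw [← Nat.card_eq_fintype_card, Nat.card_units, Nat.card_eq_fintype_card]
    have h := MulChar.pow_card_eq_one (R := ℂ) T
    rwa [hcard] at h
  unfold hypF21
  set N := Fintype.card F - 1 with hN
  set h : MulChar F ℂ → ℂ := fun ψ =>
    (A * B * C) (-1) * A⁻¹ x *
      (binomC F (A * ψ) ψ * binomC F ((A * C⁻¹) * ψ) ((A * B⁻¹) * ψ) * ψ x⁻¹) with hh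
  have key : ∑ m ∈ range N,
        binomC F (A * T ^ m) (T ^ m) * binomC F (B * T ^ m) (C * T ^ m) * (T ^ m) x
      = ∑ m ∈ range N, h (T ^ m) := by
    calc ∑ m ∈ range N,
          binomC F (A * T ^ m) (T ^ m) * binomC F (B * T ^ m) (C * T ^ m) * (T ^ m) x
        = ∑ m ∈ range N, h ((T ^ a * T ^ m)⁻¹) := by
          refine Finset.sum_congr rfl fun m _ => ?_
          rw [← ha]
          exact (termwise F A B C (T ^ m) x hx).symm
      _ = ∑ m ∈ range N, h (T ^ m) := reindex_sum F T N hTN a h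
  rw [key, hh]
  simp only []
  rw [← Finset.mul_sum]
  ring
end

section
/- Let q be an odd prime power, b ∈ F_q^*, T a generator of the character group of F_q^*, and θ the canonical additive character. Then ∑_{y,z ∈ F_q^*} θ(zb) θ(−zy²) = 1 + q · T^{(q-1)/2}(b). -/
open Finset

lemma sum_units_eq {F : Type} [Field F] [Fintype F] [DecidableEq F] (g : F → ℂ) :
    ∑ z : Fˣ, g z = (∑ z : F, g z) - g 0 := by
  rw [eq_sub_iff_add_eq, ← Finset.sum_erase_add Finset.univ g (Finset.mem_univ 0)]
  congr 1
  rw [Finset.sum_subtype (p := fun x : F => x ≠ 0) (Finset.univ.erase (0:F))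
    (fun x => by simp) g]
  exact Fintype.sum_equiv unitsEquivNeZero _ _ (fun z => rfl)

lemma quad_eq_pow {F : Type} [Field F] [Fintype F] [DecidableEq F]
    (hF : ringChar F ≠ 2)
    (T : MulChar F ℂ) (hT : ∀ χ : MulChar F ℂ, ∃ n : ℕ, χ = T ^ n) :
    (quadraticChar F).ringHomComp (Int.castRingHom ℂ) = T ^ ((Fintype.card F - 1) / 2) := by
  set q := Fintype.card F with hqdef
  haveI : NeZero ((Monoid.exponent Fˣ : ℕ) : ℂ) :=
    ⟨by exact_mod_cast Monoid.exponent_ne_zero_of_finite⟩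
  have hcard : Nat.card (MulChar F ℂ) = q - 1 := by
    rw [MulChar.card_eq_card_units_of_hasEnoughRootsOfUnity F ℂ, Nat.card_eq_fintype_card,
      Fintype.card_units]
  have htop : Subgroup.zpowers T = ⊤ := by
    rw [Subgroup.eq_top_iff']
    intro χ
    obtain ⟨n, rfl⟩ := hT χ
    exact Subgroup.mem_zpowers_iff.mpr ⟨n, by rw [zpow_natCast]⟩
  have hordT : orderOf T = q - 1 := by
    rw [← Nat.card_zpowers, htop, ← hcard]
    exact Nat.card_congr Subgroup.topEquiv.toEquiv
  set χ₀ := (quadraticChar F).ringHomComp (Int.castRingHom ℂ) with hχ₀def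
  have hχ₀sq : χ₀ ^ 2 = 1 := ((quadraticChar_isQuadratic F).comp _).sq_eq_one
  have hχ₀ne : χ₀ ≠ 1 := by
    obtain ⟨a, ha⟩ := FiniteField.exists_nonsquare hF
    have ha0 : a ≠ 0 := fun h => ha (h ▸ ⟨0, by simp⟩)
    intro h
    have h1 : χ₀ a = -1 := by
      simp [hχ₀def, MulChar.ringHomComp_apply, quadraticChar_neg_one_iff_not_isSquare.mpr ha]
    rw [h, MulChar.one_apply (isUnit_iff_ne_zero.mpr ha0)] at h1
    norm_num at h1
  obtain ⟨n, hn⟩ := hT χ₀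
  have h2n : T ^ (2 * n) = 1 := by rw [mul_comm, pow_mul, ← hn, hχ₀sq]
  have hdvd : (q - 1) ∣ 2 * n := hordT ▸ orderOf_dvd_of_pow_eq_one h2n
  have hq1pos : 0 < q - 1 := Nat.sub_pos_of_lt Fintype.one_lt_card
  have hTn : T ^ n = T ^ (n % (q - 1)) := by
    conv_lhs => rw [← Nat.div_add_mod n (q - 1)]
    rw [pow_add, pow_mul, ← hordT, pow_orderOf_eq_one, one_pow, one_mul]
  set r := n % (q - 1) with hrdef
  have hnd := Nat.div_add_mod n (q - 1)
  set k := n / (q - 1) with hkdef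
  have hdvdr : (q - 1) ∣ 2 * r := by
    have h1 : (q - 1) ∣ 2 * n - (q - 1) * (2 * k) :=
      Nat.dvd_sub hdvd ⟨2 * k, rfl⟩
    have h3 : (q - 1) * (2 * k) = 2 * ((q - 1) * k) := by ring
    have h2 : 2 * n - (q - 1) * (2 * k) = 2 * r := by omega
    rwa [h2] at h1
  have hrlt : r < q - 1 := Nat.mod_lt _ hq1pos
  clear_value r
  obtain ⟨m, hm⟩ := hdvdr
  have hmlt : m < 2 := by nlinarith [hm, hrlt, hq1pos]
  have hm2 : m = 0 ∨ m = 1 := by omega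
  rcases hm2 with hm0 | hm1
  · exfalso
    apply hχ₀ne
    subst hm0
    rw [mul_zero] at hm
    have hr0 : r = 0 := by omega
    rw [hn, hTn, hr0, pow_zero]
  · subst hm1
    rw [mul_one] at hm
    have hr : r = (q - 1) / 2 := by omega
    rw [hn, hTn, hr]

open scoped Classical in
theorem stmt_15 (p e : ℕ) [Fact p.Prime] (hp : p ≠ 2) (he : 0 < e)
    (F : Type) [Field F] [Fintype F] [Algebra (ZMod p) F]
    (hq : Fintype.card F = p ^ e)
    (b : F) (hb : b ≠ 0)
    (T : MulChar F ℂ) (hT : ∀ χ : MulChar F ℂ, ∃ n : ℕ, χ = T ^ n) :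
    ∑ z : Fˣ, ∑ y : Fˣ, theta p F ((z : F) * b) * theta p F (-((z : F) * (y : F) ^ 2)) =
      1 + (Fintype.card F : ℂ) * (T ^ ((Fintype.card F - 1) / 2)) b := by
  have hinj : Function.Injective (algebraMap (ZMod p) F) := (algebraMap (ZMod p) F).injective
  haveI : CharP F p := charP_of_injective_algebraMap hinj p
  have hchar : ringChar F = p := ringChar.eq F p
  subst hchar
  set P := ringChar F with hPdef
  have hP : Fact P.Prime := ‹_›
  have hp0 : P ≠ 0 := hP.out.pos.ne'
  haveI : NeZero P := ⟨hp0⟩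
  -- the additive character
  set ζ : ℂ := Complex.exp (2 * Real.pi * Complex.I / P) with hζdef
  have hζ : IsPrimitiveRoot ζ P := by
    have := Complex.isPrimitiveRoot_exp P hp0
    rwa [hζdef]
  have hζ1 : ζ ^ P = 1 := hζ.pow_eq_one
  set ψ : AddChar F ℂ := (AddChar.zmodChar P hζ1).compAddMonoidHom
      (Algebra.trace (ZMod P) F).toAddMonoidHom with hψdef
  have hψapp : ∀ α : F, ψ α = ζ ^ (Algebra.trace (ZMod P) F α).val := fun α => rfl
  have hψ : ∀ α : F, ψ α = theta P F α := by
    intro α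
    rw [hψapp, theta, hζdef, ← Complex.exp_nat_mul]
    congr 1
    ring
  -- nontriviality and primitivity
  have hψne : ψ ≠ 1 := by
    obtain ⟨x, hx⟩ := FiniteField.trace_to_zmod_nondegenerate F (one_ne_zero (α := F))
    rw [one_mul] at hx
    refine AddChar.ne_one_iff.mpr ⟨x, ?_⟩
    rw [hψapp]
    intro h
    have hd : P ∣ (Algebra.trace (ZMod P) F x).val := (hζ.pow_eq_one_iff_dvd _).mp h
    have hlt : (Algebra.trace (ZMod P) F x).val < P := ZMod.val_lt _
    have h0 : (Algebra.trace (ZMod P) F x).val = 0 := Nat.eq_zero_of_dvd_of_lt hd hlt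
    exact hx (by rwa [← ZMod.val_eq_zero])
  have hprim : ψ.IsPrimitive := AddChar.IsPrimitive.of_ne_one hψne
  set q := Fintype.card F with hqdef
  -- sum over units of shifted character
  have hsum : ∀ c : F, ∑ z : Fˣ, ψ ((z : F) * c) = (if c = 0 then (q : ℂ) else 0) - 1 := by
    intro c
    rw [sum_units_eq (fun z => ψ (z * c)), AddChar.sum_mulShift c hprim, zero_mul,
      AddChar.map_zero_eq_one]
    split_ifs <;> simp [hqdef]
  -- rewrite the summand
  have key : ∀ (z y : Fˣ), theta P F ((z : F) * b) * theta P F (-((z : F) * (y : F) ^ 2))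
      = ψ ((z : F) * (b - (y : F) ^ 2)) := by
    intro z y
    rw [← hψ, ← hψ, ← AddChar.map_add_eq_mul]
    congr 1
    ring
  calc ∑ z : Fˣ, ∑ y : Fˣ, theta P F ((z : F) * b) * theta P F (-((z : F) * (y : F) ^ 2))
      = ∑ y : Fˣ, ∑ z : Fˣ, ψ ((z : F) * (b - (y : F) ^ 2)) := by
        rw [Finset.sum_comm]
        exact Finset.sum_congr rfl fun y _ => Finset.sum_congr rfl fun z _ => key z y
    _ = ∑ y : Fˣ, ((if (y : F) ^ 2 = b then (q : ℂ) else 0) - 1) := by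
        refine Finset.sum_congr rfl fun y _ => ?_
        rw [hsum]
        rcases eq_or_ne ((y : F) ^ 2) b with h | h
        · simp [h, sub_eq_zero]
        · simp [sub_eq_zero, h, Ne.symm h]
    _ = (∑ y : Fˣ, if (y : F) ^ 2 = b then (q : ℂ) else 0) - (q - 1) := by
        rw [Finset.sum_sub_distrib, Finset.sum_const, Finset.card_univ,
          Fintype.card_units (α := F), nsmul_eq_mul, mul_one,
          Nat.cast_sub Fintype.card_pos, Nat.cast_one]
    _ = (∑ x : F, if x ^ 2 = b then (q : ℂ) else 0) - (q - 1) := by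
        rw [sum_units_eq (fun x => if x ^ 2 = b then (q : ℂ) else 0)]
        have h0 : (if (0 : F) ^ 2 = b then (q : ℂ) else 0) = 0 := by
          simp [Ne.symm hb]
        rw [h0, sub_zero]
    _ = 1 + (q : ℂ) * (T ^ ((q - 1) / 2)) b := by
        rw [← Finset.sum_filter]
        rw [Finset.sum_const, nsmul_eq_mul]
        have hcount : ((Finset.univ.filter fun x : F => x ^ 2 = b).card : ℤ)
            = quadraticChar F b + 1 := by
          have h := quadraticChar_card_sqrts hp b
          rwa [Set.toFinset_setOf] at h
        have hc : ((Finset.univ.filter fun x : F => x ^ 2 = b).card : ℂ)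
            = ((quadraticChar F b : ℤ) : ℂ) + 1 := by exact_mod_cast hcount
        have hqc : ((quadraticChar F b : ℤ) : ℂ) = (T ^ ((q - 1) / 2)) b := by
          rw [← quad_eq_pow hp T hT]
          simp [MulChar.ringHomComp_apply]
        rw [hc, hqc]
        ring
end
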